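/- Let 0 < d < D be integers, let L₁ be a d-flat in ℝ^D, let x ∈ L₁, let 0 < w < r, and let Ω ⊆ ℝ^D be a measurable set such that Ω ∩ B(x,r) = T(L₁,w) ∩ B(x,r). Define β₂(x,r)² = inf over d-flats L of (1/vol(Ω ∩ B(x,r))) · ∫_{Ω ∩ B(x,r)} (dist(y,L)/(2r))² dy. Then β₂(x,r)² ≤ ((D−d)/(D−d+2)) · (w²/(4r²)) · (1 − w²/r²)^{−d/2}. -/

import Mathlib

open MeasureTheory Metric Module Set

/-- The tube of width `w` around a set `L`. -/
def tube {E : Type*} [PseudoMetricSpace E] (L : Set E) (w : ℝ) : Set E :=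
  {y | infDist y L ≤ w}

/-- The squared (scaled) least squares `β₂` number of `Ω ∩ B(x,r)`: the infimum over all
`d`-dimensional affine subspaces `L` of `ℝ^D` of the average over `Ω ∩ B(x,r)` of
`(dist(y,L)/(2r))²`, with respect to Lebesgue measure. -/
noncomputable def beta2Sq (d D : ℕ) (Ω : Set (EuclideanSpace ℝ (Fin D)))
    (x : EuclideanSpace ℝ (Fin D)) (r : ℝ) : ℝ :=
  sInf { s : ℝ | ∃ L : AffineSubspace ℝ (EuclideanSpace ℝ (Fin D)),
    Module.finrank ℝ L.direction = d ∧ (L : Set (EuclideanSpace ℝ (Fin D))).Nonempty ∧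
    s = ((volume (Ω ∩ closedBall x r)).toReal)⁻¹ *
      ∫ y in Ω ∩ closedBall x r,
        (infDist y (L : Set (EuclideanSpace ℝ (Fin D))) / (2 * r)) ^ 2 }

lemma infDist_affine_eq {E : Type*} [NormedAddCommGroup E] [InnerProductSpace ℝ E]
    {L : AffineSubspace ℝ E} {x : E} (hx : x ∈ L)
    {a b : E} (ha : a ∈ L.direction) (hb : b ∈ L.directionᗮ) :
    infDist (x + (a + b)) (L : Set E) = ‖b‖ := by
  have hs : (L : Set E).Nonempty := ⟨x, hx⟩
  have key : ∀ z ∈ (L : Set E), ‖b‖ ≤ dist (x + (a + b)) z := by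
    intro z hz
    have hzx : z - x ∈ L.direction := by
      simpa using AffineSubspace.vsub_mem_direction hz hx
    have hu : a - (z - x) ∈ L.direction := sub_mem ha hzx
    have hinner : inner ℝ (a - (z - x)) b = (0 : ℝ) :=
      (Submodule.mem_orthogonal _ _).1 hb _ hu
    have hd : dist (x + (a + b)) z = ‖(a - (z - x)) + b‖ := by
      rw [dist_eq_norm]; congr 1; abel
    have h2 : ‖(a - (z - x)) + b‖ ^ 2 = ‖a - (z - x)‖ ^ 2 + ‖b‖ ^ 2 := by
      rw [norm_add_sq_real, hinner]; ring
    rw [hd]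
    nlinarith [norm_nonneg ((a - (z - x)) + b), norm_nonneg (a - (z - x)), norm_nonneg b]
  refine le_antisymm ?_ ?_
  · have hmem : x + a ∈ L := by
      simpa [add_comm] using AffineSubspace.vadd_mem_of_mem_direction ha hx
    calc infDist (x + (a + b)) (L : Set E) ≤ dist (x + (a + b)) (x + a) :=
          infDist_le_dist_of_mem hmem
      _ = ‖b‖ := by rw [dist_eq_norm]; congr 1; abel
  · by_contra h
    push_neg at h
    obtain ⟨z, hz, hlt⟩ := (infDist_lt_iff hs).1 h
    exact absurd hlt (not_lt.2 (key z hz))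

lemma moment_integral (n : ℕ) (hn : 0 < n) {w : ℝ} (hw : 0 < w) :
    ∫ q in closedBall (0 : EuclideanSpace ℝ (Fin n)) w, ‖q‖ ^ 2 =
      (n : ℝ) * (volume (ball (0 : EuclideanSpace ℝ (Fin n)) 1)).toReal *
        (w ^ (n + 2) / (n + 2)) := by
  have hnt : Nontrivial (EuclideanSpace ℝ (Fin n)) := by
    have : Nonempty (Fin n) := ⟨⟨0, hn⟩⟩
    infer_instance
  have hdim : Module.finrank ℝ (EuclideanSpace ℝ (Fin n)) = n := by simp
  have h1 : ∫ q in closedBall (0 : EuclideanSpace ℝ (Fin n)) w, ‖q‖ ^ 2 =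
      ∫ q : EuclideanSpace ℝ (Fin n),
        (fun t : ℝ => if t ≤ w then t ^ 2 else 0) ‖q‖ := by
    rw [← integral_indicator measurableSet_closedBall]
    congr 1; ext q
    by_cases h : ‖q‖ ≤ w <;> simp [Set.indicator, mem_closedBall_zero_iff, h]
  rw [h1, MeasureTheory.integral_fun_norm_addHaar volume
      (fun t : ℝ => if t ≤ w then t ^ 2 else 0), hdim]
  have h3 : ∫ y in Ioi (0:ℝ), y ^ (n-1) • (if y ≤ w then y ^ 2 else 0) =
      ∫ y in Ioc (0:ℝ) w, y ^ (n+1) := by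
    rw [← integral_indicator measurableSet_Ioi, ← integral_indicator measurableSet_Ioc]
    congr 1; ext y
    by_cases h0 : 0 < y
    · by_cases hyw : y ≤ w
      · simp only [Set.indicator, mem_Ioi, h0, if_true, mem_Ioc, hyw, and_true,
          smul_eq_mul]
        rw [← pow_add]
        congr 1; omega
      · simp [Set.indicator, h0, hyw, mem_Ioc]
    · simp [Set.indicator, h0, mem_Ioc, mem_Ioi]
  have h4 : ∫ y in Ioc (0:ℝ) w, y ^ (n+1) = w ^ (n + 2) / (n + 2) := by
    rw [← intervalIntegral.integral_of_le hw.le, integral_pow]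
    have : n + 1 + 1 = n + 2 := by omega
    rw [this]
    push_cast
    ring
  rw [h3, h4]
  simp only [nsmul_eq_mul, smul_eq_mul, measureReal_def]
  ring

set_option maxHeartbeats 2000000 in
/-- If inside `B(x,r)`, with `x ∈ L₁` and `0 < w < r`, the set `Ω` coincides with the tube
`T(L₁,w)`, then `β₂(x,r)² ≤ ((D−d)/(D−d+2)) · (w²/(4r²)) · (1 − w²/r²)^{−d/2}`. -/
theorem beta2Sq_upper_bound (d D : ℕ) (hd : 0 < d) (hdD : d < D)
    (L₁ : AffineSubspace ℝ (EuclideanSpace ℝ (Fin D)))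
    (hL₁d : Module.finrank ℝ L₁.direction = d)
    (x : EuclideanSpace ℝ (Fin D)) (hx : x ∈ L₁)
    (w r : ℝ) (hw : 0 < w) (hwr : w < r)
    (Ω : Set (EuclideanSpace ℝ (Fin D))) (hΩmeas : MeasurableSet Ω)
    (hΩ : Ω ∩ closedBall x r =
      tube (L₁ : Set (EuclideanSpace ℝ (Fin D))) w ∩ closedBall x r) :
    beta2Sq d D Ω x r ≤
      (((D - d : ℕ) : ℝ) / (((D - d : ℕ) : ℝ) + 2)) * (w ^ 2 / (4 * r ^ 2)) *
        (1 - w ^ 2 / r ^ 2) ^ (-(d : ℝ) / 2) := by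
  classical
  have hr : 0 < r := hw.trans hwr
  set n := D - d with hn_def
  have hn : 0 < n := by omega
  rw [beta2Sq]
  refine le_trans (csInf_le ⟨0, ?_⟩ ⟨L₁, hL₁d, ⟨x, hx⟩, rfl⟩) ?_
  · rintro s ⟨L, -, -, rfl⟩
    exact mul_nonneg (inv_nonneg.2 ENNReal.toReal_nonneg)
      (integral_nonneg fun y => sq_nonneg _)
  -- setup
  set K := L₁.direction with hK_def
  have hKd : finrank ℝ K = d := hL₁d
  have hED : finrank ℝ (EuclideanSpace ℝ (Fin D)) = D := by simp
  have hKO : finrank ℝ Kᗮ = n := by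
    have h := Submodule.finrank_add_finrank_orthogonal K
    rw [hKd, hED] at h
    omega
  let bK : OrthonormalBasis (Fin d) ℝ K := (stdOrthonormalBasis ℝ K).reindex (finCongr hKd)
  let bO : OrthonormalBasis (Fin n) ℝ (↥Kᗮ) :=
    (stdOrthonormalBasis ℝ (↥Kᗮ)).reindex (finCongr hKO)
  -- the linear map
  let P₁ : EuclideanSpace ℝ (Fin d ⊕ Fin n) →ₗ[ℝ] EuclideanSpace ℝ (Fin d) :=
    (WithLp.linearEquiv 2 ℝ (Fin d → ℝ)).symm.toLinearMap ∘ₗ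
      (LinearMap.funLeft ℝ ℝ Sum.inl) ∘ₗ
      (WithLp.linearEquiv 2 ℝ (Fin d ⊕ Fin n → ℝ)).toLinearMap
  let P₂ : EuclideanSpace ℝ (Fin d ⊕ Fin n) →ₗ[ℝ] EuclideanSpace ℝ (Fin n) :=
    (WithLp.linearEquiv 2 ℝ (Fin n → ℝ)).symm.toLinearMap ∘ₗ
      (LinearMap.funLeft ℝ ℝ Sum.inr) ∘ₗ
      (WithLp.linearEquiv 2 ℝ (Fin d ⊕ Fin n → ℝ)).toLinearMap
  let Tlm : EuclideanSpace ℝ (Fin d ⊕ Fin n) →ₗ[ℝ] EuclideanSpace ℝ (Fin D) :=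
    (K.subtype ∘ₗ bK.repr.symm.toLinearEquiv.toLinearMap ∘ₗ P₁) +
    (Kᗮ.subtype ∘ₗ bO.repr.symm.toLinearEquiv.toLinearMap ∘ₗ P₂)
  have hTlm : ∀ z : EuclideanSpace ℝ (Fin d ⊕ Fin n),
      Tlm z = ((bK.repr.symm (P₁ z) : K) : EuclideanSpace ℝ (Fin D)) + ((bO.repr.symm (P₂ z) : ↥Kᗮ) : EuclideanSpace ℝ (Fin D)) := fun z => rfl
  have hsq : ∀ v : EuclideanSpace ℝ (Fin D), ∀ hv : v ∈ K, ∀ u : EuclideanSpace ℝ (Fin D), ∀ hu : u ∈ Kᗮ, ‖v + u‖^2 = ‖v‖^2 + ‖u‖^2 := by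
    intro v hv u hu
    have hinner : inner ℝ v u = (0 : ℝ) := (Submodule.mem_orthogonal _ _).1 hu _ hv
    rw [norm_add_sq_real, hinner]; ring
  have hTnorm : ∀ z : EuclideanSpace ℝ (Fin d ⊕ Fin n), ‖Tlm z‖ = ‖z‖ := by
    intro z
    have h2 : ‖Tlm z‖^2 = ‖P₁ z‖^2 + ‖P₂ z‖^2 := by
      rw [hTlm z, hsq _ (Submodule.coe_mem _) _ (Submodule.coe_mem _)]
      have e1 : ‖((bK.repr.symm (P₁ z) : K) : EuclideanSpace ℝ (Fin D))‖ = ‖P₁ z‖ := by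
        rw [show ‖((bK.repr.symm (P₁ z) : K) : EuclideanSpace ℝ (Fin D))‖ = ‖bK.repr.symm (P₁ z)‖ from rfl,
          LinearIsometryEquiv.norm_map]
      have e2 : ‖((bO.repr.symm (P₂ z) : ↥Kᗮ) : EuclideanSpace ℝ (Fin D))‖ = ‖P₂ z‖ := by
        rw [show ‖((bO.repr.symm (P₂ z) : ↥Kᗮ) : EuclideanSpace ℝ (Fin D))‖ = ‖bO.repr.symm (P₂ z)‖ from rfl,
          LinearIsometryEquiv.norm_map]
      rw [e1, e2]
    have h3 : ‖z‖^2 = ‖P₁ z‖^2 + ‖P₂ z‖^2 := by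
      have hz : ‖z‖^2 = ∑ s : Fin d ⊕ Fin n, ‖z s‖^2 := by
        rw [EuclideanSpace.norm_eq, Real.sq_sqrt (by positivity)]
      have hp : ‖P₁ z‖^2 = ∑ i : Fin d, ‖z (Sum.inl i)‖^2 := by
        rw [EuclideanSpace.norm_eq, Real.sq_sqrt (by positivity)]; rfl
      have hq : ‖P₂ z‖^2 = ∑ j : Fin n, ‖z (Sum.inr j)‖^2 := by
        rw [EuclideanSpace.norm_eq, Real.sq_sqrt (by positivity)]; rfl
      rw [hz, hp, hq, Fintype.sum_sum_type]
    calc ‖Tlm z‖ = √(‖Tlm z‖^2) := (Real.sqrt_sq (norm_nonneg _)).symm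
      _ = √(‖z‖^2) := by rw [h2, ← h3]
      _ = ‖z‖ := Real.sqrt_sq (norm_nonneg _)
  let Tli : EuclideanSpace ℝ (Fin d ⊕ Fin n) →ₗᵢ[ℝ] EuclideanSpace ℝ (Fin D) := ⟨Tlm, hTnorm⟩
  have hfr : finrank ℝ (EuclideanSpace ℝ (Fin d ⊕ Fin n)) = finrank ℝ (EuclideanSpace ℝ (Fin D)) := by
    rw [hED, finrank_euclideanSpace]
    simp; omega
  let Teq := Tli.toLinearIsometryEquiv hfr
  -- measurable equivalence
  let Fm : (EuclideanSpace ℝ (Fin d) × EuclideanSpace ℝ (Fin n)) ≃ᵐ EuclideanSpace ℝ (Fin D) :=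
    (((((MeasurableEquiv.toLp 2 (Fin d → ℝ)).symm).prodCongr
        ((MeasurableEquiv.toLp 2 (Fin n → ℝ)).symm)).trans
      (MeasurableEquiv.sumPiEquivProdPi (fun _ : Fin d ⊕ Fin n => ℝ)).symm).trans
      (((MeasurableEquiv.toLp 2 (Fin d ⊕ Fin n → ℝ)).symm).symm)).trans
      ((Teq.toHomeomorph.toMeasurableEquiv).trans
        (Homeomorph.addLeft x).toMeasurableEquiv)
  have hFm : ∀ z : EuclideanSpace ℝ (Fin d) × EuclideanSpace ℝ (Fin n),
      Fm z = x + (((bK.repr.symm z.1 : K) : EuclideanSpace ℝ (Fin D)) + ((bO.repr.symm z.2 : ↥Kᗮ) : EuclideanSpace ℝ (Fin D))) := by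
    intro z; rfl
  have hFmp : MeasurePreserving (⇑Fm) (volume.prod volume) volume := by
    have h1 := (EuclideanSpace.volume_preserving_symm_measurableEquiv_toLp (Fin d)).prod
      (EuclideanSpace.volume_preserving_symm_measurableEquiv_toLp (Fin n))
    have h2 := MeasureTheory.volume_measurePreserving_sumPiEquivProdPi_symm
      (fun _ : Fin d ⊕ Fin n => ℝ)
    have h3 := (EuclideanSpace.volume_preserving_symm_measurableEquiv_toLp (Fin d ⊕ Fin n)).symm
    have h4 := Teq.measurePreserving
    have h5 := measurePreserving_add_left (volume : Measure (EuclideanSpace ℝ (Fin D))) x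
    exact ((((h5.comp h4).comp h3).comp h2).comp h1)
  -- geometric identities
  have hdist : ∀ z : EuclideanSpace ℝ (Fin d) × EuclideanSpace ℝ (Fin n),
      infDist (Fm z) (L₁ : Set (EuclideanSpace ℝ (Fin D))) = ‖z.2‖ := by
    intro z
    rw [hFm z, infDist_affine_eq hx (Submodule.coe_mem _) (Submodule.coe_mem _)]
    exact bO.repr.symm.norm_map z.2
  have hdb : ∀ z : EuclideanSpace ℝ (Fin d) × EuclideanSpace ℝ (Fin n),
      dist (Fm z) x ^ 2 = ‖z.1‖^2 + ‖z.2‖^2 := by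
    intro z
    rw [hFm z, dist_eq_norm, add_sub_cancel_left,
      hsq _ (Submodule.coe_mem _) _ (Submodule.coe_mem _)]
    have e1 : ‖((bK.repr.symm z.1 : K) : EuclideanSpace ℝ (Fin D))‖ = ‖z.1‖ :=
      bK.repr.symm.norm_map z.1
    have e2 : ‖((bO.repr.symm z.2 : ↥Kᗮ) : EuclideanSpace ℝ (Fin D))‖ = ‖z.2‖ :=
      bO.repr.symm.norm_map z.2
    rw [e1, e2]
  -- the set S and its preimage A
  set S : Set (EuclideanSpace ℝ (Fin D)) := Ω ∩ closedBall x r with hSdef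
  have hStube : S = tube (L₁ : Set (EuclideanSpace ℝ (Fin D))) w ∩ closedBall x r := hΩ
  have hSmeas : MeasurableSet S := by
    rw [hStube]
    exact (IsClosed.measurableSet (isClosed_le (continuous_infDist_pt _)
      continuous_const)).inter measurableSet_closedBall
  set A : Set (EuclideanSpace ℝ (Fin d) × EuclideanSpace ℝ (Fin n)) := ⇑Fm ⁻¹' S with hAdef
  have hAset : A = {z : EuclideanSpace ℝ (Fin d) × EuclideanSpace ℝ (Fin n) |
      ‖z.2‖ ≤ w ∧ ‖z.1‖^2 + ‖z.2‖^2 ≤ r^2} := by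
    ext z
    simp only [hAdef, Set.mem_preimage, hStube, Set.mem_inter_iff, Set.mem_setOf_eq]
    constructor
    · rintro ⟨h1, h2⟩
      have h1' : ‖z.2‖ ≤ w := by rwa [tube, Set.mem_setOf_eq, hdist z] at h1
      refine ⟨h1', ?_⟩
      rw [← hdb z]
      have h2' := mem_closedBall.1 h2
      nlinarith [dist_nonneg (x := Fm z) (y := x)]
    · rintro ⟨h1, h2⟩
      refine ⟨by rwa [tube, Set.mem_setOf_eq, hdist z], ?_⟩
      rw [mem_closedBall]
      nlinarith [hdb z, dist_nonneg (x := Fm z) (y := x)]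
  -- parameters
  set ρ : ℝ := Real.sqrt (r^2 - w^2) with hρdef
  have hρ2 : ρ^2 = r^2 - w^2 := Real.sq_sqrt (by nlinarith)
  have hρpos : 0 < ρ := Real.sqrt_pos.2 (by nlinarith)
  set c₁ := (volume (ball (0 : EuclideanSpace ℝ (Fin d)) 1)).toReal with hc₁
  set c₂ := (volume (ball (0 : EuclideanSpace ℝ (Fin n)) 1)).toReal with hc₂
  have hc₁pos : 0 < c₁ :=
    ENNReal.toReal_pos (measure_ball_pos _ _ one_pos).ne' measure_ball_lt_top.ne
  have hc₂pos : 0 < c₂ :=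
    ENNReal.toReal_pos (measure_ball_pos _ _ one_pos).ne' measure_ball_lt_top.ne
  have hdimd : finrank ℝ (EuclideanSpace ℝ (Fin d)) = d := by simp
  have hdimn : finrank ℝ (EuclideanSpace ℝ (Fin n)) = n := by simp
  have hcb : ∀ s : ℝ, 0 ≤ s → volume (closedBall (0 : EuclideanSpace ℝ (Fin d)) s)
      = ENNReal.ofReal (s ^ d) * volume (ball (0 : EuclideanSpace ℝ (Fin d)) 1) := by
    intro s hs; rw [Measure.addHaar_closedBall volume 0 hs, hdimd]
  have hcbn : volume (closedBall (0 : EuclideanSpace ℝ (Fin n)) w)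
      = ENNReal.ofReal (w ^ n) * volume (ball (0 : EuclideanSpace ℝ (Fin n)) 1) := by
    rw [Measure.addHaar_closedBall volume 0 hw.le, hdimn]
  have hPA : (volume.prod volume) A = volume S :=
    hFmp.measure_preimage hSmeas.nullMeasurableSet
  have hSfin : volume S ≠ ⊤ :=
    (lt_of_le_of_lt (measure_mono Set.inter_subset_right) measure_closedBall_lt_top).ne
  -- lower bound for the volume
  have hsub : closedBall (0 : EuclideanSpace ℝ (Fin d)) ρ ×ˢ
      closedBall (0 : EuclideanSpace ℝ (Fin n)) w ⊆ A := by
    rintro ⟨p, q⟩ ⟨hp, hq⟩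
    rw [hAset]
    have h1 := mem_closedBall_zero_iff.1 hp
    have h2 := mem_closedBall_zero_iff.1 hq
    refine ⟨h2, ?_⟩
    simp only
    nlinarith [norm_nonneg p, norm_nonneg q]
  have hlowE : ENNReal.ofReal (ρ^d) * volume (ball (0 : EuclideanSpace ℝ (Fin d)) 1)
      * (ENNReal.ofReal (w^n) * volume (ball (0 : EuclideanSpace ℝ (Fin n)) 1))
      ≤ volume S := by
    rw [← hPA]
    calc ENNReal.ofReal (ρ^d) * volume (ball (0 : EuclideanSpace ℝ (Fin d)) 1)
        * (ENNReal.ofReal (w^n) * volume (ball (0 : EuclideanSpace ℝ (Fin n)) 1))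
        = (volume.prod volume) (closedBall (0 : EuclideanSpace ℝ (Fin d)) ρ ×ˢ
            closedBall (0 : EuclideanSpace ℝ (Fin n)) w) := by
          rw [Measure.prod_prod, hcb ρ hρpos.le, hcbn]
      _ ≤ (volume.prod volume) A := measure_mono hsub
  have hm_le : ρ^d * c₁ * (w^n * c₂) ≤ (volume S).toReal := by
    have h := ENNReal.toReal_mono hSfin hlowE
    rw [ENNReal.toReal_mul, ENNReal.toReal_mul, ENNReal.toReal_mul,
      ENNReal.toReal_ofReal (by positivity), ENNReal.toReal_ofReal (by positivity)] at h
    exact h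
  have hm_pos : 0 < ρ^d * c₁ * (w^n * c₂) := by positivity
  -- integral transfer and upper bound
  have hIS : (∫ y in S, (infDist y (L₁ : Set (EuclideanSpace ℝ (Fin D))) / (2*r))^2)
      = ∫ z in A, (‖z.2‖ / (2*r))^2 ∂(volume.prod volume) := by
    rw [← hFmp.setIntegral_preimage_emb Fm.measurableEmbedding
      (fun y => (infDist y (L₁ : Set (EuclideanSpace ℝ (Fin D))) / (2*r))^2) S]
    refine integral_congr_ae (Filter.Eventually.of_forall fun z => ?_)
    show (infDist (Fm z) (L₁ : Set (EuclideanSpace ℝ (Fin D))) / (2*r))^2 = (‖z.2‖ / (2*r))^2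
    rw [hdist z]
  set U := closedBall (0 : EuclideanSpace ℝ (Fin d)) r ×ˢ
    closedBall (0 : EuclideanSpace ℝ (Fin n)) w with hUdef
  have hAU : A ⊆ U := by
    rw [hAset]
    rintro ⟨p, q⟩ ⟨h1, h2⟩
    simp only at h1 h2
    exact ⟨mem_closedBall_zero_iff.2 (by nlinarith [norm_nonneg p, norm_nonneg q]),
      mem_closedBall_zero_iff.2 h1⟩
  have hUint : IntegrableOn
      (fun z : EuclideanSpace ℝ (Fin d) × EuclideanSpace ℝ (Fin n) => (‖z.2‖/(2*r))^2)
      U (volume.prod volume) :=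
    (((continuous_snd.norm).div_const (2*r)).pow 2).continuousOn.integrableOn_compact
      ((isCompact_closedBall _ _).prod (isCompact_closedBall _ _))
  have hAint_le : (∫ z in A, (‖z.2‖ / (2*r))^2 ∂(volume.prod volume))
      ≤ ∫ z in U, (‖z.2‖ / (2*r))^2 ∂(volume.prod volume) :=
    setIntegral_mono_set hUint (Filter.Eventually.of_forall fun z => sq_nonneg _)
      (HasSubset.Subset.eventuallyLE hAU)
  have hU : (∫ z in U, (‖z.2‖ / (2*r))^2 ∂(volume.prod volume))
      = (volume (closedBall (0 : EuclideanSpace ℝ (Fin d)) r)).toReal *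
        ∫ q in closedBall (0 : EuclideanSpace ℝ (Fin n)) w, (‖q‖/(2*r))^2 := by
    have h := integral_fun_snd
      (μ := volume.restrict (closedBall (0 : EuclideanSpace ℝ (Fin d)) r))
      (ν := volume.restrict (closedBall (0 : EuclideanSpace ℝ (Fin n)) w))
      (fun q : EuclideanSpace ℝ (Fin n) => (‖q‖/(2*r))^2)
    rw [Measure.prod_restrict, measureReal_def, Measure.restrict_apply_univ] at h
    rw [hUdef]
    exact h
  have hmom : (∫ q in closedBall (0 : EuclideanSpace ℝ (Fin n)) w, (‖q‖/(2*r))^2)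
      = ((n:ℝ) * c₂ * (w^(n+2)/(n+2))) / (2*r)^2 := by
    simp_rw [div_pow]
    rw [integral_div, moment_integral n hn hw, ← hc₂]
  have hcbr : (volume (closedBall (0 : EuclideanSpace ℝ (Fin d)) r)).toReal = r^d * c₁ := by
    rw [hcb r hr.le, ENNReal.toReal_mul, ENNReal.toReal_ofReal (by positivity), ← hc₁]
  have hIS_le : (∫ y in S, (infDist y (L₁ : Set (EuclideanSpace ℝ (Fin D))) / (2*r))^2)
      ≤ r^d * c₁ * (((n:ℝ) * c₂ * (w^(n+2)/(n+2))) / (2*r)^2) := by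
    rw [hIS]
    calc (∫ z in A, (‖z.2‖ / (2*r))^2 ∂(volume.prod volume))
        ≤ ∫ z in U, (‖z.2‖ / (2*r))^2 ∂(volume.prod volume) := hAint_le
      _ = r^d * c₁ * (((n:ℝ) * c₂ * (w^(n+2)/(n+2))) / (2*r)^2) := by
          rw [hU, hmom, hcbr]
  have hrpow : (1 - w^2/r^2 : ℝ) ^ (-(d:ℝ)/2) = r^d / ρ^d := by
    have h1 : (1 - w^2/r^2 : ℝ) = (ρ/r)^2 := by
      rw [div_pow, hρ2]
      field_simp
    have h2 : ((2:ℕ):ℝ) * (-(d:ℝ)/2) = -(d:ℝ) := by push_cast; ring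
    rw [h1, ← Real.rpow_natCast (ρ/r) 2, ← Real.rpow_mul (by positivity), h2,
      Real.rpow_neg (by positivity), Real.rpow_natCast, div_pow, inv_div]
  have hfinal : (volume S).toReal⁻¹ *
      ∫ y in S, (infDist y (L₁ : Set (EuclideanSpace ℝ (Fin D))) / (2*r))^2
      ≤ (ρ^d * c₁ * (w^n * c₂))⁻¹ *
        (r^d * c₁ * (((n:ℝ) * c₂ * (w^(n+2)/(n+2))) / (2*r)^2)) := by
    apply mul_le_mul
    · exact inv_anti₀ hm_pos hm_le
    · exact hIS_le
    · exact integral_nonneg fun y => sq_nonneg _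
    · positivity
  refine le_trans hfinal (le_of_eq ?_)
  rw [hrpow]
  have hn2 : ((n:ℝ)+2) ≠ 0 := by positivity
  have hwn : w^(n+2) = w^n * w^2 := by ring
  rw [hwn]
  field_simp
  ring
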